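/- For every n ≥ 1, every binary sequence of length n that contains none of the blocks (011100), (001110), (001111100) as a contiguous sub-block can be converted to a ternary sequence satisfying the TGP(2) constraint by changing some of its 1's to −1's; that is, S_{F(2)}(n) ⊆ B_{3;2}(n). (Consequence of Lemma 11) -/
import Mathlib


/-- `x` is a ternary sequence: every entry lies in `{-1, 0, 1} ⊆ ℤ`. -/
def IsTernary {n : ℕ} (x : Fin n → ℤ) : Prop :=
  ∀ i, x i = -1 ∨ x i = 0 ∨ x i = 1

/-- A ternary sequence `x` of length `n` (0-indexed positions) satisfies the TGP(t)
constraint. -/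
def SatisfiesTGPt (t : ℕ) {n : ℕ} (x : Fin n → ℤ) : Prop :=
  ∀ k l m : Fin n, x k ≠ 0 → x k = x l → x l = x m →
    max (max |((k : ℕ) : ℤ) - ((l : ℕ) : ℤ)| |((l : ℕ) : ℤ) - ((m : ℕ) : ℤ)|)
        |((m : ℕ) : ℤ) - ((k : ℕ) : ℤ)| ≤ (t : ℤ) →
    ∀ i : Fin n, ((i : ℕ) : ℤ) = ((k : ℕ) : ℤ) + ((l : ℕ) : ℤ) - ((m : ℕ) : ℤ) →
      x i ≠ 0

/-- `B3t t n = ξ(T_{3;t}(n))`: binary sequences of length `n` obtainable as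
componentwise absolute values of TGP(t)-constrained ternary sequences. -/
def B3t (t n : ℕ) : Set (Fin n → Fin 2) :=
  {y | ∃ x : Fin n → ℤ, IsTernary x ∧ SatisfiesTGPt t x ∧
    y = fun i => if x i = 0 then 0 else 1}

/-- `y` contains the pattern `p` as a contiguous sub-block. -/
def HasBlock {n m : ℕ} (y : Fin n → Fin 2) (p : Fin m → Fin 2) : Prop :=
  ∃ i : ℕ, ∃ h : i + m ≤ n,
    ∀ j : Fin m, y ⟨i + j.val, by have := j.isLt; omega⟩ = p j

/-- `SF2 n`: binary sequences of length `n` avoiding all three forbidden blocks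
`(011100)`, `(001110)`, `(001111100)` of `F(2)`. -/
def SF2 (n : ℕ) : Set (Fin n → Fin 2) :=
  {y | ¬ HasBlock y ![0, 1, 1, 1, 0, 0] ∧ ¬ HasBlock y ![0, 0, 1, 1, 1, 0] ∧
       ¬ HasBlock y ![0, 0, 1, 1, 1, 1, 1, 0, 0]}


namespace TGPAux

/-- extended binary sequence as a Bool predicate on ℕ -/
def Yb (n : ℕ) (y : Fin n → Fin 2) (i : ℕ) : Bool :=
  if h : i < n then decide (y ⟨i, h⟩ = 1) else false

lemma Yb_lt {n : ℕ} {y : Fin n → Fin 2} {i : ℕ} (h : Yb n y i = true) : i < n := by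
  by_contra hc
  simp [Yb, hc] at h

/-- start of the run containing `i` (if `Yb i`); in general, the least `s` such
that everything in `[s, i)` is `Yb`. -/
def st (n : ℕ) (y : Fin n → Fin 2) : ℕ → ℕ
  | 0 => 0
  | (i+1) => if Yb n y i then st n y i else i + 1

/-- first non-`Yb` position `≥ i`. -/
def en (n : ℕ) (y : Fin n → Fin 2) (i : ℕ) : ℕ :=
  if h : Yb n y i = true then en n y (i+1) else i
termination_by n - i
decreasing_by
  have := Yb_lt h; omega

lemma st_le (n : ℕ) (y : Fin n → Fin 2) (i : ℕ) : st n y i ≤ i := by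
  induction i with
  | zero => simp [st]
  | succ i ih =>
    by_cases h : Yb n y i = true
    · simp [st, h]; omega
    · simp [st, h]

lemma st_succ {n : ℕ} {y : Fin n → Fin 2} {i : ℕ} (h : Yb n y i = true) :
    st n y (i+1) = st n y i := by simp [st, h]

lemma st_run {n : ℕ} {y : Fin n → Fin 2} (i : ℕ) :
    ∀ j, st n y i ≤ j → j < i → Yb n y j = true := by
  induction i with
  | zero => intro j h1 h2; omega
  | succ i ih =>
    intro j h1 h2
    by_cases h : Yb n y i = true
    · rw [st_succ h] at h1
      rcases Nat.lt_or_ge j i with hj | hj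
      · exact ih j h1 hj
      · have : j = i := by omega
        subst this; exact h
    · simp [st, h] at h1; omega

lemma st_boundary {n : ℕ} {y : Fin n → Fin 2} (i : ℕ) :
    st n y i = 0 ∨ Yb n y (st n y i - 1) = false := by
  induction i with
  | zero => left; simp [st]
  | succ i ih =>
    by_cases h : Yb n y i = true
    · rw [st_succ h]; exact ih
    · right
      have hst : st n y (i+1) = i + 1 := by simp [st, h]
      rw [hst]
      simp at h
      simpa using h

lemma en_eq (n : ℕ) (y : Fin n → Fin 2) (i : ℕ) :
    en n y i = if Yb n y i = true then en n y (i+1) else i := by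
  rw [en]; simp

lemma en_succ {n : ℕ} {y : Fin n → Fin 2} {i : ℕ} (h : Yb n y i = true) :
    en n y i = en n y (i+1) := by rw [en_eq, if_pos h]

lemma en_of_not {n : ℕ} {y : Fin n → Fin 2} {i : ℕ} (h : Yb n y i = false) :
    en n y i = i := by rw [en_eq, h]; simp

lemma en_ge (n : ℕ) (y : Fin n → Fin 2) (i : ℕ) : i ≤ en n y i := by
  by_cases h : Yb n y i = true
  · rw [en_succ h]
    have hlt := Yb_lt h
    have := en_ge n y (i+1)
    omega
  · rw [en_of_not (by simp at h ⊢; exact h)]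
termination_by n - i
decreasing_by
  have := Yb_lt h; omega

lemma en_not (n : ℕ) (y : Fin n → Fin 2) (i : ℕ) : Yb n y (en n y i) = false := by
  by_cases h : Yb n y i = true
  · rw [en_succ h]
    have hlt := Yb_lt h
    exact en_not n y (i+1)
  · rw [en_of_not (by simp at h ⊢; exact h)]
    simp at h; exact h
termination_by n - i
decreasing_by
  have := Yb_lt h; omega

lemma en_le_n {n : ℕ} {y : Fin n → Fin 2} {i : ℕ} (h : i ≤ n) : en n y i ≤ n := by
  by_cases hy : Yb n y i = true
  · rw [en_succ hy]
    have hlt := Yb_lt hy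
    exact en_le_n (by omega)
  · rw [en_of_not (by simp at hy ⊢; exact hy)]; exact h
termination_by n - i
decreasing_by
  have := Yb_lt hy; omega

lemma Yb_of_between {n : ℕ} {y : Fin n → Fin 2} {i j : ℕ} (h1 : i ≤ j)
    (h2 : j < en n y i) : Yb n y j = true := by
  by_cases hy : Yb n y i = true
  · rcases Nat.eq_or_lt_of_le h1 with rfl | hlt
    · exact hy
    · have hlt' := Yb_lt hy
      rw [en_succ hy] at h2
      exact Yb_of_between (by omega) h2
  · rw [en_of_not (by simp at hy ⊢; exact hy)] at h2; omega
termination_by n - i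
decreasing_by
  have := Yb_lt hy; omega

lemma lt_en {n : ℕ} {y : Fin n → Fin 2} {i : ℕ} (h : Yb n y i = true) :
    i < en n y i := by
  rw [en_succ h]
  have := en_ge n y (i+1); omega

lemma en_st {n : ℕ} {y : Fin n → Fin 2} {i : ℕ} (h : Yb n y i = true) :
    en n y (st n y i) = en n y i := by
  induction i with
  | zero => simp [st]
  | succ i ih =>
    by_cases hy : Yb n y i = true
    · rw [st_succ hy, ih hy, en_succ hy]
    · simp [st, hy]

lemma st_idem {n : ℕ} {y : Fin n → Fin 2} (i : ℕ) :
    st n y (st n y i) = st n y i := by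
  rcases st_boundary (n := n) (y := y) i with h | h
  · rw [h]; simp [st]
  · rcases Nat.eq_zero_or_pos (st n y i) with h0 | h0
    · rw [h0]; simp [st]
    · have : st n y i = (st n y i - 1) + 1 := by omega
      rw [this]
      simp [st, h]

lemma Yb_st {n : ℕ} {y : Fin n → Fin 2} {i : ℕ} (h : Yb n y i = true) :
    Yb n y (st n y i) = true := by
  rcases Nat.eq_or_lt_of_le (st_le n y i) with he | hlt
  · rw [he]; exact h
  · exact st_run i _ le_rfl hlt


/-- sign pattern within a run starting at `s` of length `L`, at offset `d`;
`true` denotes `-1`. -/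
def patB (n : ℕ) (y : Fin n → Fin 2) (s L d : ℕ) : Bool :=
  if L = 3 then
    if s = 0 then decide (d = 2) else if s + 3 = n then decide (d = 0)
    else decide (d = 1)
  else if L = 5 then
    if s ≤ 1 ∨ Yb n y (s - 2) = true then decide (d = 0 ∨ d = 2 ∨ d = 3)
    else decide (d = 1 ∨ d = 2 ∨ d = 4)
  else if L % 2 = 0 then decide ((d + 1) / 2 % 2 = 1)
  else if d = 0 then false
  else if d ≤ 2 then true
  else decide ((d - 2) / 2 % 2 = 1)

/-- global flip of the run starting at `s`, chained across gap-1 adjacencies. -/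
def flip (n : ℕ) (y : Fin n → Fin 2) (s : ℕ) : Bool :=
  if h : 2 ≤ s ∧ Yb n y (s - 2) = true then
    let p := st n y (s - 2)
    ((!((flip n y p).xor
        (patB n y p (en n y p - p) (en n y p - p - 1)))).xor
      (patB n y s (en n y s - s) 0))
  else false
termination_by s
decreasing_by
  have := st_le n y (s - 2); omega

/-- the sign bool at position `i`. -/
def B (n : ℕ) (y : Fin n → Fin 2) (i : ℕ) : Bool :=
  (flip n y (st n y i)).xor
    (patB n y (st n y i) (en n y (st n y i) - st n y i) (i - st n y i))

/-- the constructed ternary sequence. -/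
def xseq (n : ℕ) (y : Fin n → Fin 2) (i : Fin n) : ℤ :=
  if Yb n y i.val then (if B n y i.val then -1 else 1) else 0

lemma flip_eq {n : ℕ} {y : Fin n → Fin 2} {s : ℕ} (h2 : 2 ≤ s)
    (hY : Yb n y (s-2) = true) :
    flip n y s =
      ((!((flip n y (st n y (s-2))).xor
        (patB n y (st n y (s-2)) (en n y (st n y (s-2)) - st n y (s-2))
          (en n y (st n y (s-2)) - st n y (s-2) - 1)))).xor
      (patB n y s (en n y s - s) 0)) := by
  rw [flip]
  simp [h2, hY]

lemma xseq_ne_zero_iff {n : ℕ} {y : Fin n → Fin 2} {i : Fin n} :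
    xseq n y i ≠ 0 ↔ Yb n y i.val = true := by
  unfold xseq
  by_cases h : Yb n y i.val = true
  · simp [h]; split <;> simp
  · simp at h; simp [h]

lemma xseq_eq_iff {n : ℕ} {y : Fin n → Fin 2} {i j : Fin n}
    (hi : Yb n y i.val = true) (hj : Yb n y j.val = true) :
    xseq n y i = xseq n y j ↔ B n y i.val = B n y j.val := by
  unfold xseq
  rw [if_pos hi, if_pos hj]
  cases hbi : B n y i.val <;> cases hbj : B n y j.val <;> simp <;> omega


lemma B_cross {n : ℕ} {y : Fin n → Fin 2} {a : ℕ} (ha : Yb n y a = true)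
    (hgap : Yb n y (a+1) = false) (hb : Yb n y (a+2) = true) :
    B n y (a+2) = !(B n y a) := by
  have hst2 : st n y (a+2) = a + 2 := by
    show st n y ((a+1)+1) = a+2
    simp [st, hgap]
  have hflip : flip n y (a+2) =
      ((!((flip n y (st n y a)).xor
        (patB n y (st n y a) (en n y (st n y a) - st n y a)
          (en n y (st n y a) - st n y a - 1)))).xor
      (patB n y (a+2) (en n y (a+2) - (a+2)) 0)) := by
    have := flip_eq (n := n) (y := y) (s := a+2) (by omega) (by simpa using ha)
    simpa using this
  have hena : en n y a = a + 1 := by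
    rw [en_succ ha, en_of_not hgap]
  have hensta : en n y (st n y a) = a + 1 := by rw [en_st ha, hena]
  have hsle := st_le n y a
  have hidx : en n y (st n y a) - st n y a - 1 = a - st n y a := by omega
  have hBa : B n y a = (flip n y (st n y a)).xor
      (patB n y (st n y a) (en n y (st n y a) - st n y a)
        (en n y (st n y a) - st n y a - 1)) := by
    rw [B, hidx]
  rw [B, hst2, hflip, ← hBa]
  have : a + 2 - (a + 2) = 0 := by omega
  rw [this]
  cases B n y a <;> cases patB n y (a+2) (en n y (a+2) - (a+2)) 0 <;> simp

lemma y_eq {n : ℕ} (y : Fin n → Fin 2) (i : Fin n) :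
    y i = if Yb n y i.val = true then 1 else 0 := by
  rcases i with ⟨i, h⟩
  simp only [] 
  by_cases hy : Yb n y i = true
  · rw [if_pos hy]
    unfold Yb at hy
    rw [dif_pos h] at hy
    simpa using hy
  · rw [if_neg hy]
    simp only [Bool.not_eq_true] at hy
    unfold Yb at hy
    rw [dif_pos h] at hy
    simp at hy
    revert hy
    generalize y ⟨i, h⟩ = a
    rcases a with ⟨av, hav⟩
    intro hy
    interval_cases av <;> simp_all

/-- forbidden block 001110 for an interior 3-run lacking left support -/
lemma run3_left {n : ℕ} {y : Fin n → Fin 2} (hB : ¬ HasBlock y ![0,0,1,1,1,0])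
    {s : ℕ} (h2 : 2 ≤ s) (h3n : s + 3 < n)
    (hm2 : Yb n y (s-2) = false) (hm1 : Yb n y (s-1) = false)
    (h0 : Yb n y s = true) (h1 : Yb n y (s+1) = true) (hp2 : Yb n y (s+2) = true)
    (h3 : Yb n y (s+3) = false) : False := by
  apply hB
  refine ⟨s-2, by omega, ?_⟩
  intro j
  rcases j with ⟨jv, hj⟩
  interval_cases jv <;> rw [y_eq y] <;>
    norm_num [show s-2+1 = s-1 from by omega, show s-2+2 = s from by omega,
      show s-2+3 = s+1 from by omega, show s-2+4 = s+2 from by omega,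
      show s-2+5 = s+3 from by omega, hm2, hm1, h0, h1, hp2, h3]

/-- forbidden block 011100 for an interior 3-run lacking right support -/
lemma run3_right {n : ℕ} {y : Fin n → Fin 2} (hB : ¬ HasBlock y ![0,1,1,1,0,0])
    {s : ℕ} (h1s : 1 ≤ s) (h4n : s + 4 < n)
    (hm1 : Yb n y (s-1) = false)
    (h0 : Yb n y s = true) (h1 : Yb n y (s+1) = true) (hp2 : Yb n y (s+2) = true)
    (h3 : Yb n y (s+3) = false) (h4 : Yb n y (s+4) = false) : False := by
  apply hB
  refine ⟨s-1, by omega, ?_⟩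
  intro j
  rcases j with ⟨jv, hj⟩
  interval_cases jv <;> rw [y_eq y] <;>
    norm_num [show s-1+1 = s from by omega, show s-1+2 = s+1 from by omega,
      show s-1+3 = s+2 from by omega, show s-1+4 = s+3 from by omega,
      show s-1+5 = s+4 from by omega, hm1, h0, h1, hp2, h3, h4]

/-- forbidden block 001111100 for an interior 5-run lacking support on both sides -/
lemma run5_both {n : ℕ} {y : Fin n → Fin 2} (hB : ¬ HasBlock y ![0,0,1,1,1,1,1,0,0])
    {s : ℕ} (h2 : 2 ≤ s) (h6n : s + 6 < n)
    (hm2 : Yb n y (s-2) = false) (hm1 : Yb n y (s-1) = false)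
    (h0 : Yb n y s = true) (h1 : Yb n y (s+1) = true) (hp2 : Yb n y (s+2) = true)
    (h3 : Yb n y (s+3) = true) (h4 : Yb n y (s+4) = true)
    (h5 : Yb n y (s+5) = false) (h6 : Yb n y (s+6) = false) : False := by
  apply hB
  refine ⟨s-2, by omega, ?_⟩
  intro j
  rcases j with ⟨jv, hj⟩
  interval_cases jv <;> rw [y_eq y] <;>
    norm_num [show s-2+1 = s-1 from by omega, show s-2+2 = s from by omega,
      show s-2+3 = s+1 from by omega, show s-2+4 = s+2 from by omega,
      show s-2+5 = s+3 from by omega, show s-2+6 = s+4 from by omega,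
      show s-2+7 = s+5 from by omega, show s-2+8 = s+6 from by omega,
      hm2, hm1, h0, h1, hp2, h3, h4, h5, h6]


lemma patB_5_left {n : ℕ} {y : Fin n → Fin 2} {s : ℕ} (d : ℕ)
    (hcnd : s ≤ 1 ∨ Yb n y (s - 2) = true) :
    patB n y s 5 d = decide (d = 0 ∨ d = 2 ∨ d = 3) := by
  simp [patB, hcnd]

lemma patB_5_right {n : ℕ} {y : Fin n → Fin 2} {s : ℕ} (d : ℕ)
    (hcnd : ¬ (s ≤ 1 ∨ Yb n y (s - 2) = true)) :
    patB n y s 5 d = decide (d = 1 ∨ d = 2 ∨ d = 4) := by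
  simp [patB, hcnd]

set_option maxHeartbeats 1600000 in
lemma pairSafe {n : ℕ} {y : Fin n → Fin 2}
    (h1B : ¬ HasBlock y ![0,1,1,1,0,0]) (h2B : ¬ HasBlock y ![0,0,1,1,1,0])
    (h5B : ¬ HasBlock y ![0,0,1,1,1,1,1,0,0])
    {a b c : ℕ} (ha : Yb n y a = true) (hb : Yb n y b = true)
    (hab : a ≤ b) (hb2 : b ≤ a + 2) (hBab : B n y a = B n y b)
    (hc : c < n) (hcv : (c : ℤ) = 2*(a : ℤ) - (b : ℤ) ∨ (c : ℤ) = 2*(b : ℤ) - (a : ℤ)) :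
    Yb n y c = true := by
  rcases Nat.eq_or_lt_of_le hab with rfl | haltb
  · have : c = a := by omega
    rw [this]; exact ha
  by_cases hmid : b = a + 1 ∨ Yb n y (a+1) = true
  · -- a and b lie in the same run
    have hstb : st n y b = st n y a := by
      rcases hmid with h1 | h1
      · rw [h1, st_succ ha]
      · have hb2' : b = a + 1 ∨ b = a + 2 := by omega
        rcases hb2' with h2 | h2
        · rw [h2, st_succ ha]
        · rw [h2, show a + 2 = (a+1)+1 from rfl, st_succ h1, st_succ ha]
    have henb : en n y b = en n y a := by
      rcases hmid with h1 | h1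
      · rw [h1, en_succ ha]
      · have hb2' : b = a + 1 ∨ b = a + 2 := by omega
        rcases hb2' with h2 | h2
        · rw [h2, en_succ ha]
        · rw [h2, show a + 2 = (a+1)+1 from rfl, ← en_succ h1, ← en_succ ha]
    have hens : en n y (st n y a) = en n y a := en_st ha
    have hpat : patB n y (st n y a) (en n y a - st n y a) (a - st n y a)
              = patB n y (st n y a) (en n y a - st n y a) (b - st n y a) := by
      have h1 : B n y a = (flip n y (st n y a)).xor
          (patB n y (st n y a) (en n y a - st n y a) (a - st n y a)) := by
        rw [B, hens]
      have h2 : B n y b = (flip n y (st n y a)).xor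
          (patB n y (st n y a) (en n y a - st n y a) (b - st n y a)) := by
        rw [B, hstb, hens]
      rw [h1, h2] at hBab
      cases flip n y (st n y a) <;> simpa using hBab
    -- abbreviations
    set s := st n y a with hs
    set E := en n y a with hE
    have hsa : s ≤ a := st_le n y a
    have haE : a < E := lt_en ha
    have hbE : b < E := by
      have := lt_en hb; rw [henb] at this; exact this
    have hEn : E ≤ n := by
      have : a ≤ n := le_of_lt (Yb_lt ha)
      rw [hE]; exact en_le_n this
    have hbound : s = 0 ∨ Yb n y (s - 1) = false := st_boundary a
    have hnotend : Yb n y E = false := by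
      have := en_not n y s
      rw [hens] at this; exact this
    have hrun : ∀ j, s ≤ j → j < E → Yb n y j = true := by
      intro j hj1 hj2
      exact Yb_of_between hj1 (by rw [hens]; exact hj2)
    set L := E - s with hL
    set da := a - s with hda
    set db := b - s with hdb
    have hrel : a = s + da ∧ b = s + db ∧ E = s + L ∧ da < db ∧ db ≤ da + 2
        ∧ db < L := by omega
    clear_value da db L E s
    by_cases hL3 : L = 3
    · rw [hL3] at hpat
      by_cases hs0 : s = 0
      · simp [patB, hs0] at hpat
        -- pattern [+,+,-]; only same-sign close pair is (0,1)
        have hdd : da = 0 ∧ db = 1 := by omega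
        rcases hcv with h | h
        · exfalso; omega
        · exact hrun c (by omega) (by omega)
      · by_cases hsn : s + 3 = n
        · simp [patB, hs0, hsn] at hpat
          have hdd : da = 1 ∧ db = 2 := by omega
          rcases hcv with h | h
          · exact hrun c (by omega) (by omega)
          · exfalso; omega
        · simp [patB, hs0, hsn] at hpat
          have hdd : da = 0 ∧ db = 2 := by omega
          rcases hcv with h | h
          · -- c = s - 2
            have hcs : c = s - 2 ∧ 2 ≤ s := by omega
            by_cases hY2 : Yb n y (s-2) = true
            · have : c = s - 2 := hcs.1; rw [this]; exact hY2
            · exfalso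
              refine run3_left h2B (s := s) (by omega) (by omega) ?_ ?_ ?_ ?_ ?_ ?_
              · simpa using hY2
              · rcases hbound with h' | h'; · omega
                exact h'
              · exact hrun s (by omega) (by omega)
              · exact hrun (s+1) (by omega) (by omega)
              · exact hrun (s+2) (by omega) (by omega)
              · have : s + 3 = E := by omega
                rw [this]; exact hnotend
          · -- c = s + 4
            have hcs : c = s + 4 := by omega
            by_cases hY4 : Yb n y (s+4) = true
            · rw [hcs]; exact hY4
            · exfalso
              refine run3_right h1B (s := s) (by omega) (by omega) ?_ ?_ ?_ ?_ ?_ ?_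
              · rcases hbound with h' | h'; · omega
                exact h'
              · exact hrun s (by omega) (by omega)
              · exact hrun (s+1) (by omega) (by omega)
              · exact hrun (s+2) (by omega) (by omega)
              · have : s + 3 = E := by omega
                rw [this]; exact hnotend
              · simpa using hY4
    · by_cases hL5 : L = 5
      · rw [hL5] at hpat
        by_cases hcnd : s ≤ 1 ∨ Yb n y (s - 2) = true
        · rw [patB_5_left da hcnd, patB_5_left db hcnd, decide_eq_decide] at hpat
          have hdd : (da = 0 ∧ db = 2) ∨ (da = 2 ∧ db = 3) := by omega
          rcases hdd with ⟨h1, h2⟩ | ⟨h1, h2⟩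
          · rcases hcv with h | h
            · -- c = s - 2 (exists only if s ≥ 2, then Yb (s-2))
              have hcs : c = s - 2 ∧ 2 ≤ s := by omega
              have : Yb n y (s-2) = true := by
                rcases hcnd with h' | h'; · omega
                exact h'
              rw [hcs.1]; exact this
            · exact hrun c (by omega) (by omega)
          · rcases hcv with h | h
            · exact hrun c (by omega) (by omega)
            · exact hrun c (by omega) (by omega)
        · rw [patB_5_right da hcnd, patB_5_right db hcnd, decide_eq_decide] at hpat
          push_neg at hcnd
          have hs2 : 2 ≤ s := by omega
          have hY2 : Yb n y (s-2) = false := by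
            have := hcnd.2; simpa using this
          have hdd : (da = 1 ∧ db = 2) ∨ (da = 2 ∧ db = 4) := by omega
          rcases hdd with ⟨h1, h2⟩ | ⟨h1, h2⟩
          · rcases hcv with h | h
            · exact hrun c (by omega) (by omega)
            · exact hrun c (by omega) (by omega)
          · rcases hcv with h | h
            · exact hrun c (by omega) (by omega)
            · -- c = s + 6
              have hcs : c = s + 6 := by omega
              by_cases hY6 : Yb n y (s+6) = true
              · rw [hcs]; exact hY6
              · exfalso
                refine run5_both h5B (s := s) (by omega) (by omega) hY2 ?_ ?_ ?_ ?_ ?_ ?_ ?_ ?_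
                · rcases hbound with h' | h'; · omega
                  exact h'
                · exact hrun s (by omega) (by omega)
                · exact hrun (s+1) (by omega) (by omega)
                · exact hrun (s+2) (by omega) (by omega)
                · exact hrun (s+3) (by omega) (by omega)
                · exact hrun (s+4) (by omega) (by omega)
                · have : s + 5 = E := by omega
                  rw [this]; exact hnotend
                · simpa using hY6
      · by_cases hL2 : L % 2 = 0
        · simp [patB, hL3, hL5, hL2] at hpat
          have key : db = da + 1 ∧ da % 2 = 1 ∧ db + 1 ≤ L - 1 := by omega
          exact hrun c (by omega) (by omega)
        · -- odd length ≥ 7 (or length 1, which admits no pairs)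
          by_cases hda0 : da = 0
          · exfalso
            have e1 : ¬ db = 0 := by omega
            have e2 : db ≤ 2 := by omega
            simp [patB, hL3, hL5, hL2, hda0, e1, e2] at hpat
          · by_cases hda2 : da ≤ 2
            · by_cases hdb2 : db ≤ 2
              · have hdd : da = 1 ∧ db = 2 := by omega
                have hL7 : 7 ≤ L := by omega
                exact hrun c (by omega) (by omega)
              · have e1 : ¬ db = 0 := by omega
                simp [patB, hL3, hL5, hL2, hda0, hda2, e1, hdb2] at hpat
                have hdd : da = 2 ∧ db = 4 := by omega
                have hL7 : 7 ≤ L := by omega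
                exact hrun c (by omega) (by omega)
            · have e1 : ¬ db = 0 := by omega
              have e2 : ¬ db ≤ 2 := by omega
              simp [patB, hL3, hL5, hL2, hda0, hda2, e1, e2] at hpat
              have key : db = da + 1 ∧ da % 2 = 0 ∧ db + 1 ≤ L - 1 := by omega
              exact hrun c (by omega) (by omega)
  · -- cross-gap pair: signs always differ, contradiction
    exfalso
    push_neg at hmid
    have hb2' : b = a + 2 := by omega
    subst hb2'
    have hgap : Yb n y (a+1) = false := by simpa using hmid.2
    rw [B_cross ha hgap hb] at hBab
    cases B n y a <;> simp at hBab


set_option maxHeartbeats 1600000 in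
lemma tripleFalse {n : ℕ} {y : Fin n → Fin 2} {a : ℕ}
    (ha : Yb n y a = true) (h1 : Yb n y (a+1) = true) (h2 : Yb n y (a+2) = true)
    (e1 : B n y a = B n y (a+1)) (e2 : B n y (a+1) = B n y (a+2)) : False := by
  have hst1 : st n y (a+1) = st n y a := st_succ ha
  have hst2 : st n y (a+2) = st n y a := by
    rw [show a + 2 = (a+1)+1 from rfl, st_succ h1, hst1]
  have hen1 : en n y (a+1) = en n y a := (en_succ ha).symm
  have hen2 : en n y (a+2) = en n y a := by
    rw [show a + 2 = (a+1)+1 from rfl, ← en_succ h1, hen1]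
  have hens : en n y (st n y a) = en n y a := en_st ha
  have hp1 : patB n y (st n y a) (en n y a - st n y a) (a - st n y a)
           = patB n y (st n y a) (en n y a - st n y a) (a + 1 - st n y a) := by
    have g1 : B n y a = (flip n y (st n y a)).xor
        (patB n y (st n y a) (en n y a - st n y a) (a - st n y a)) := by rw [B, hens]
    have g2 : B n y (a+1) = (flip n y (st n y a)).xor
        (patB n y (st n y a) (en n y a - st n y a) (a + 1 - st n y a)) := by
      rw [B, hst1, hens]
    rw [g1, g2] at e1
    cases flip n y (st n y a) <;> simpa using e1
  have hp2 : patB n y (st n y a) (en n y a - st n y a) (a + 1 - st n y a)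
           = patB n y (st n y a) (en n y a - st n y a) (a + 2 - st n y a) := by
    have g1 : B n y (a+1) = (flip n y (st n y a)).xor
        (patB n y (st n y a) (en n y a - st n y a) (a + 1 - st n y a)) := by
      rw [B, hst1, hens]
    have g2 : B n y (a+2) = (flip n y (st n y a)).xor
        (patB n y (st n y a) (en n y a - st n y a) (a + 2 - st n y a)) := by
      rw [B, hst2, hens]
    rw [g1, g2] at e2
    cases flip n y (st n y a) <;> simpa using e2
  set s := st n y a with hs
  set E := en n y a with hE
  have hsa : s ≤ a := st_le n y a
  have haE : a < E := lt_en ha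
  have h2E : a + 2 < E := by
    have := lt_en h2; rw [hen2] at this; exact this
  set L := E - s with hL
  set d := a - s with hd
  have hrel : a = s + d ∧ E = s + L ∧ d + 2 < L := by omega
  have hd1 : a + 1 - s = d + 1 := by omega
  have hd2 : a + 2 - s = d + 2 := by omega
  rw [hd1] at hp1 hp2
  rw [hd2] at hp2
  clear_value d L E s
  by_cases hL3 : L = 3
  · rw [hL3] at hp1 hp2
    have hd0 : d = 0 := by omega
    rw [hd0] at hp1 hp2
    by_cases hs0 : s = 0
    · simp [patB, hs0] at hp1 hp2
    · by_cases hsn : s + 3 = n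
      · simp [patB, hs0, hsn] at hp1 hp2
      · simp [patB, hs0, hsn] at hp1 hp2
  · by_cases hL5 : L = 5
    · rw [hL5] at hp1 hp2
      by_cases hcnd : s ≤ 1 ∨ Yb n y (s - 2) = true
      · rw [patB_5_left d hcnd, patB_5_left (d+1) hcnd, decide_eq_decide] at hp1
        rw [patB_5_left (d+1) hcnd, patB_5_left (d+2) hcnd, decide_eq_decide] at hp2
        omega
      · rw [patB_5_right d hcnd, patB_5_right (d+1) hcnd, decide_eq_decide] at hp1
        rw [patB_5_right (d+1) hcnd, patB_5_right (d+2) hcnd, decide_eq_decide] at hp2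
        omega
    · by_cases hL2 : L % 2 = 0
      · simp [patB, hL3, hL5, hL2] at hp1 hp2
        omega
      · by_cases hd0 : d = 0
        · simp [patB, hL3, hL5, hL2, hd0] at hp1
        · by_cases hd2 : d ≤ 2
          · have g1 : d = 1 ∨ d = 2 := by omega
            rcases g1 with g | g <;> rw [g] at hp1 hp2 <;>
              simp [patB, hL3, hL5, hL2] at hp1 hp2 <;> omega
          · have g1 : ¬ d + 1 ≤ 2 := by omega
            have g2 : ¬ d + 2 ≤ 2 := by omega
            have g3 : ¬ d + 1 = 0 := by omega
            have g4 : ¬ d + 2 = 0 := by omega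
            simp [patB, hL3, hL5, hL2, hd0, hd2, g1, g2, g3, g4] at hp1 hp2
            omega


lemma tripleFalseAny {n : ℕ} {y : Fin n → Fin 2} {u v w : ℕ}
    (hu : Yb n y u = true) (hv : Yb n y v = true) (hw : Yb n y w = true)
    (nuv : u ≠ v) (nvw : v ≠ w) (nuw : u ≠ w)
    (c2 : v ≤ u + 2) (c4 : w ≤ v + 2) (c6 : w ≤ u + 2)
    (c1 : u ≤ v + 2) (c3 : v ≤ w + 2) (c5 : u ≤ w + 2)
    (b1 : B n y u = B n y v) (b2 : B n y v = B n y w) : False := by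
  have b3 := b1.trans b2
  rcases Nat.lt_trichotomy u v with h1 | h1 | h1
  · rcases Nat.lt_trichotomy v w with h2 | h2 | h2
    · -- u < v < w
      have e1 : v = u + 1 := by omega
      have e2 : w = u + 2 := by omega
      subst e1; subst e2
      exact tripleFalse hu hv hw b1 b2
    · exact nvw h2
    · rcases Nat.lt_trichotomy u w with h3 | h3 | h3
      · -- u < w < v
        have e1 : w = u + 1 := by omega
        have e2 : v = u + 2 := by omega
        subst e1; subst e2
        exact tripleFalse hu hw hv b3 b2.symm
      · exact nuw h3
      · -- w < u < v
        have e1 : u = w + 1 := by omega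
        have e2 : v = w + 2 := by omega
        subst e2
        subst e1
        exact tripleFalse hw hu hv b3.symm b1
  · exact nuv h1
  · rcases Nat.lt_trichotomy v w with h2 | h2 | h2
    · rcases Nat.lt_trichotomy u w with h3 | h3 | h3
      · -- v < u < w
        have e1 : u = v + 1 := by omega
        have e2 : w = v + 2 := by omega
        subst e2
        subst e1
        exact tripleFalse hv hu hw b1.symm b3
      · exact nuw h3
      · -- v < w < u
        have e1 : w = v + 1 := by omega
        have e2 : u = v + 2 := by omega
        subst e2
        subst e1
        exact tripleFalse hv hw hu b2 b3.symm
    · exact nvw h2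
    · -- w < v < u
      have e1 : v = w + 1 := by omega
      have e2 : u = w + 2 := by omega
      subst e2
      subst e1
      exact tripleFalse hw hv hu b2.symm b1.symm

end TGPAux

set_option maxHeartbeats 1600000 in
/-- **Consequence of Lemma 11.** For every `n ≥ 1`, every binary sequence of
length `n` avoiding the three forbidden blocks of `F(2)` can be converted into a
TGP(2)-constrained ternary sequence by changing some of its ones to `-1`:
`S_{F(2)}(n) ⊆ B_{3;2}(n)`. -/
theorem SF2_subset_B32 (n : ℕ) (hn : 1 ≤ n) : SF2 n ⊆ B3t 2 n := by
  intro y hy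
  obtain ⟨h1B, h2B, h5B⟩ := hy
  refine ⟨TGPAux.xseq n y, ?_, ?_, ?_⟩
  · intro i
    unfold TGPAux.xseq
    split
    · split
      · left; rfl
      · right; right; rfl
    · right; left; rfl
  · intro k l m hk0 hkl hlm hmax i hi
    have hYk : TGPAux.Yb n y k.val = true := TGPAux.xseq_ne_zero_iff.mp hk0
    have hl0 : TGPAux.xseq n y l ≠ 0 := by rw [← hkl]; exact hk0
    have hm0 : TGPAux.xseq n y m ≠ 0 := by rw [← hlm]; exact hl0
    have hYl : TGPAux.Yb n y l.val = true := TGPAux.xseq_ne_zero_iff.mp hl0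
    have hYm : TGPAux.Yb n y m.val = true := TGPAux.xseq_ne_zero_iff.mp hm0
    have hmax' : |((k:ℕ):ℤ) - ((l:ℕ):ℤ)| ≤ 2 ∧ |((l:ℕ):ℤ) - ((m:ℕ):ℤ)| ≤ 2 ∧
        |((m:ℕ):ℤ) - ((k:ℕ):ℤ)| ≤ 2 := by
      rw [max_le_iff, max_le_iff] at hmax
      exact ⟨hmax.1.1, hmax.1.2, hmax.2⟩
    obtain ⟨q1, q2, q3⟩ := hmax'
    rw [abs_le] at q1 q2 q3
    rw [TGPAux.xseq_ne_zero_iff]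
    by_cases hmk : (m : ℕ) = (k : ℕ)
    · have : (i : ℕ) = (l : ℕ) := by omega
      rw [this]; exact hYl
    · by_cases hml : (m : ℕ) = (l : ℕ)
      · have : (i : ℕ) = (k : ℕ) := by omega
        rw [this]; exact hYk
      · by_cases hkl2 : (k : ℕ) = (l : ℕ)
        · have hxkm : TGPAux.xseq n y k = TGPAux.xseq n y m := hkl.trans hlm
          have hBkm : TGPAux.B n y k.val = TGPAux.B n y m.val :=
            (TGPAux.xseq_eq_iff hYk hYm).mp hxkm
          rcases le_or_gt (k : ℕ) (m : ℕ) with h | h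
          · exact TGPAux.pairSafe h1B h2B h5B hYk hYm h (by omega) hBkm i.isLt
              (Or.inl (by omega))
          · exact TGPAux.pairSafe h1B h2B h5B hYm hYk (le_of_lt h) (by omega)
              hBkm.symm i.isLt (Or.inr (by omega))
        · exfalso
          have hBkl : TGPAux.B n y k.val = TGPAux.B n y l.val :=
            (TGPAux.xseq_eq_iff hYk hYl).mp hkl
          have hBlm : TGPAux.B n y l.val = TGPAux.B n y m.val :=
            (TGPAux.xseq_eq_iff hYl hYm).mp hlm
          exact TGPAux.tripleFalseAny hYk hYl hYm hkl2
            (fun hh => hml hh.symm) (fun hh => hmk hh.symm)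
            (by omega) (by omega) (by omega) (by omega) (by omega) (by omega)
            hBkl hBlm
  · funext i
    rw [TGPAux.y_eq y i]
    unfold TGPAux.xseq
    by_cases h : TGPAux.Yb n y i.val = true
    · rw [if_pos h, if_pos h]
      cases TGPAux.B n y i.val <;> norm_num
    · rw [if_neg h, if_neg h]
      simp
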